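/- arXiv:math/9801026 — 2 statements merged into one kernel-verified Lean document; each statement's English description precedes it below -/
import Mathlib

section
/- Let f : ℝ → ℝ be a C² function with f ≥ 0 and f(t₀) = 0. Then for all t, f'(t)² ≤ 2 f(t) · max { f''(t₀ + r(t - t₀)) : 0 ≤ r ≤ 2 }. -/
open Set

private lemma iter2_reflect (f : ℝ → ℝ) (c x : ℝ) :
    iteratedDeriv 2 (fun y => f (c - y)) x = iteratedDeriv 2 f (c - x) := by
  have h1 : (fun y : ℝ => f (c - y)) = (fun y : ℝ => f (c + y)) ∘ (fun y : ℝ => -y) := by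
    funext y; simp [sub_eq_add_neg]
  rw [h1]
  have h2 := iteratedDeriv_comp_neg 2 (fun y : ℝ => f (c + y)) x
  simp only [Function.comp_def] at h2 ⊢
  rw [h2, iteratedDeriv_comp_const_add]
  norm_num [sub_eq_add_neg]

private lemma iterWithin2_eq (f : ℝ → ℝ) (hf : ContDiff ℝ 2 f) {a b x : ℝ} (hab : a < b)
    (hx : x ∈ Set.Ioo a b) :
    iteratedDerivWithin 2 f (Set.Icc a b) x = iteratedDeriv 2 f x := by
  have hu : UniqueDiffOn ℝ (Icc a b) := uniqueDiffOn_Icc hab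
  have hIcc : Icc a b ∈ nhds x :=
    Filter.mem_of_superset (isOpen_Ioo.mem_nhds hx) Ioo_subset_Icc_self
  have h1 : iteratedDerivWithin 1 f (Icc a b) =ᶠ[nhds x] deriv f := by
    filter_upwards [isOpen_Ioo.mem_nhds hx] with y hy
    rw [iteratedDerivWithin_one]
    exact ((hf.differentiable two_ne_zero) y).derivWithin (hu _ (Ioo_subset_Icc_self hy))
  calc iteratedDerivWithin 2 f (Icc a b) x
      = derivWithin (iteratedDerivWithin 1 f (Icc a b)) (Icc a b) x :=
        congrFun (iteratedDerivWithin_succ (n := 1)) x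
    _ = deriv (iteratedDerivWithin 1 f (Icc a b)) x := derivWithin_of_mem_nhds hIcc
    _ = deriv (deriv f) x := h1.deriv_eq
    _ = iteratedDeriv 2 f x := by rw [iteratedDeriv_succ, iteratedDeriv_one]

private lemma taylor2 (f : ℝ → ℝ) (hf : ContDiff ℝ 2 f) {a b : ℝ} (hab : a < b) :
    ∃ c ∈ Set.Ioo a b,
      f b = f a + deriv f a * (b - a) + iteratedDeriv 2 f c * (b - a) ^ 2 / 2 := by
  have hu : UniqueDiffOn ℝ (Icc a b) := uniqueDiffOn_Icc hab
  have hd1 : Differentiable ℝ (deriv f) := by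
    have := hf.differentiable_iteratedDeriv 1 (by norm_num)
    rwa [iteratedDeriv_one] at this
  have heq : EqOn (iteratedDerivWithin 1 f (Icc a b)) (deriv f) (Ioo a b) := by
    intro y hy
    rw [iteratedDerivWithin_one]
    exact ((hf.differentiable two_ne_zero) y).derivWithin (hu _ (Ioo_subset_Icc_self hy))
  have hf' : DifferentiableOn ℝ (iteratedDerivWithin 1 f (Icc a b)) (Ioo a b) :=
    (hd1.differentiableOn).congr heq
  obtain ⟨c, hc, H⟩ := taylor_mean_remainder_lagrange (f := f) (n := 1) hab.ne
    (by rw [uIcc_of_le hab.le]; exact hf.contDiffOn.of_le (by norm_num))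
    (by rw [uIcc_of_le hab.le, uIoo_of_le hab.le]; exact hf')
  rw [uIoo_of_le hab.le] at hc
  rw [uIcc_of_le hab.le, show (1:ℕ) + 1 = 2 from rfl] at H
  refine ⟨c, hc, ?_⟩
  rw [iterWithin2_eq f hf hab hc] at H
  have ht : taylorWithinEval f 1 (Icc a b) a b = f a + deriv f a * (b - a) := by
    rw [taylor_within_apply]
    simp [Finset.sum_range_succ, iteratedDerivWithin_one,
      ((hf.differentiable two_ne_zero) a).derivWithin (hu _ (left_mem_Icc.mpr hab.le))]
    ring
  rw [ht] at H
  norm_num [Nat.factorial] at H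
  linarith

private lemma taylor2' (f : ℝ → ℝ) (hf : ContDiff ℝ 2 f) {a b : ℝ} (hab : a < b) :
    ∃ c ∈ Set.Ioo a b,
      f a = f b + deriv f b * (a - b) + iteratedDeriv 2 f c * (a - b) ^ 2 / 2 := by
  set g : ℝ → ℝ := fun x => f (a + b - x) with hg_def
  have hg : ContDiff ℝ 2 g := hf.comp (contDiff_const.sub contDiff_id)
  obtain ⟨c, hc, H⟩ := taylor2 g hg hab
  refine ⟨a + b - c, ⟨by linarith [hc.2], by linarith [hc.1]⟩, ?_⟩
  have hga : g a = f b := by simp [hg_def]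
  have hgb : g b = f a := by simp [hg_def]
  have hdg : deriv g a = -deriv f b := by
    have := deriv_comp_const_sub (f := f) (a := a + b) (x := a)
    simpa [hg_def] using this
  have hig : iteratedDeriv 2 g c = iteratedDeriv 2 f (a + b - c) :=
    iter2_reflect f (a + b) c
  rw [hga, hgb, hdg, hig] at H
  rw [H]; ring

set_option maxHeartbeats 1000000 in
private lemma aux_main (f : ℝ → ℝ) (t₀ : ℝ) (hf : ContDiff ℝ 2 f)
    (hpos : ∀ t, 0 ≤ f t) (h0 : f t₀ = 0) (t : ℝ) (ht : t₀ ≤ t) :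
    (deriv f t) ^ 2 ≤
      2 * f t * sSup ((fun r : ℝ => iteratedDeriv 2 f (t₀ + r * (t - t₀))) '' Set.Icc 0 2) := by
  set M := sSup ((fun r : ℝ => iteratedDeriv 2 f (t₀ + r * (t - t₀))) '' Set.Icc 0 2) with hM_def
  have hd0 : deriv f t₀ = 0 := by
    have hmin : IsLocalMin f t₀ :=
      Filter.Eventually.of_forall (fun y => h0 ▸ (h0 ▸ hpos y))
    exact hmin.deriv_eq_zero
  rcases eq_or_lt_of_le ht with rfl | ht'
  · simp [hd0, h0]
  -- now t₀ < t
  have hcont2 : Continuous (iteratedDeriv 2 f) := hf.continuous_iteratedDeriv 2 le_rfl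
  have hB : BddAbove ((fun r : ℝ => iteratedDeriv 2 f (t₀ + r * (t - t₀))) '' Set.Icc 0 2) :=
    (isCompact_Icc.image (hcont2.comp (by continuity))).bddAbove
  have hd : (0:ℝ) < t - t₀ := by linarith
  have hle : ∀ x ∈ Icc t₀ (2*t - t₀), iteratedDeriv 2 f x ≤ M := by
    intro x hx
    apply le_csSup hB
    refine ⟨(x - t₀)/(t - t₀), ⟨div_nonneg (by linarith [hx.1]) hd.le,
      (div_le_iff₀ hd).mpr (by linarith [hx.2])⟩, ?_⟩
    field_simp
    congr 1; ring
  clear_value M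
  -- Taylor from t₀ to t
  obtain ⟨x1, hx1, H1⟩ := taylor2 f hf ht'
  rw [h0, hd0] at H1
  have hx1' : iteratedDeriv 2 f x1 ≤ M :=
    hle x1 ⟨hx1.1.le, by linarith [hx1.2]⟩
  have hx1pos : 0 ≤ iteratedDeriv 2 f x1 := by
    have hdsq : (0:ℝ) < (t - t₀)^2 := by positivity
    nlinarith [hpos t, hdsq]
  have hMpos : 0 ≤ M := le_trans hx1pos hx1'
  have hft : f t ≤ M * (t - t₀)^2 / 2 := by nlinarith
  -- MVT for deriv f on [t₀, t]
  have hd1 : Differentiable ℝ (deriv f) := by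
    have := hf.differentiable_iteratedDeriv 1 (by norm_num)
    rwa [iteratedDeriv_one] at this
  obtain ⟨c, hc, Hc⟩ := exists_deriv_eq_slope (deriv f) ht'
    (hd1.continuous.continuousOn) (hd1.differentiableOn)
  rw [hd0] at Hc
  have hc2 : deriv (deriv f) c = iteratedDeriv 2 f c := by
    rw [iteratedDeriv_succ, iteratedDeriv_one]
  have hcle : iteratedDeriv 2 f c ≤ M := hle c ⟨hc.1.le, by linarith [hc.2]⟩
  have ha : deriv f t ≤ M * (t - t₀) := by
    rw [hc2] at Hc
    have : deriv f t = iteratedDeriv 2 f c * (t - t₀) := by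
      field_simp at Hc; linarith
    rw [this]
    exact mul_le_mul_of_nonneg_right hcle hd.le
  -- Taylor from t to 2t - t₀
  have ht2 : t < 2*t - t₀ := by linarith
  obtain ⟨x2, hx2, H2⟩ := taylor2 f hf ht2
  have hx2' : iteratedDeriv 2 f x2 ≤ M := hle x2 ⟨by linarith [hx2.1], hx2.2.le⟩
  have hb : -(M * (t - t₀)) ≤ deriv f t := by
    nlinarith [hpos (2*t - t₀), sq_nonneg (t - t₀)]
  rcases eq_or_lt_of_le hMpos with hM0 | hM
  · -- M = 0
    have h1 : deriv f t = 0 := le_antisymm (by rw [← hM0] at ha; linarith) (by rw [← hM0] at hb; linarith)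
    rw [h1, ← hM0]
    norm_num
  -- M > 0
  set p := deriv f t with hp_def
  clear_value p
  rcases lt_trichotomy p 0 with hp | hp | hp
  · -- p < 0 : expand forward to u = t - p/M ∈ (t, 2t - t₀]
    set u := t - p/M with hu_def
    clear_value u
    have htu : t < u := by
      have h1 : p / M < 0 := div_neg_of_neg_of_pos hp hM
      rw [hu_def]; linarith
    have hule : u ≤ 2*t - t₀ := by
      have h2 : -(t - t₀) ≤ p / M := by
        rw [le_div_iff₀ hM]; nlinarith
      rw [hu_def]; linarith
    obtain ⟨ξ, hξ, H⟩ := taylor2 f hf htu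
    have hξle : iteratedDeriv 2 f ξ ≤ M := hle ξ ⟨by linarith [hξ.1], by linarith [hξ.2]⟩
    have hMu : M * (u - t) = -p := by
      rw [hu_def]; field_simp; ring
    rw [← hp_def] at H
    have h4 : 0 ≤ f t + p*(u-t) + M*(u-t)^2/2 := by
      nlinarith [hpos u, mul_nonneg (sub_nonneg.2 hξle) (sq_nonneg (u-t))]
    have h6 : 0 ≤ M * (f t + p*(u-t) + M*(u-t)^2/2) := mul_nonneg hM.le h4
    have h7 : M * (f t + p*(u-t) + M*(u-t)^2/2) = M * f t - p^2/2 := by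
      linear_combination ((M*(u-t) + p)/2) * hMu
    rw [h7] at h6
    linarith
  · rw [hp]; nlinarith [hpos t]
  · -- p > 0 : expand backward to u = t - p/M ∈ [t₀, t)
    set u := t - p/M with hu_def
    clear_value u
    have htu : u < t := by
      have h1 : 0 < p / M := div_pos hp hM
      rw [hu_def]; linarith
    have huge : t₀ ≤ u := by
      have h2 : p / M ≤ t - t₀ := by
        rw [div_le_iff₀ hM]; nlinarith
      rw [hu_def]; linarith
    obtain ⟨ξ, hξ, H⟩ := taylor2' f hf htu
    have hξle : iteratedDeriv 2 f ξ ≤ M := hle ξ ⟨by linarith [hξ.1], by linarith [hξ.2]⟩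
    have hMu : M * (u - t) = -p := by
      rw [hu_def]; field_simp; ring
    rw [← hp_def] at H
    have h4 : 0 ≤ f t + p*(u-t) + M*(u-t)^2/2 := by
      nlinarith [hpos u, mul_nonneg (sub_nonneg.2 hξle) (sq_nonneg (u-t))]
    have h6 : 0 ≤ M * (f t + p*(u-t) + M*(u-t)^2/2) := mul_nonneg hM.le h4
    have h7 : M * (f t + p*(u-t) + M*(u-t)^2/2) = M * f t - p^2/2 := by
      linear_combination ((M*(u-t) + p)/2) * hMu
    rw [h7] at h6
    linarith

/-- Lemma 2.2: if `f` is `C²`, nonnegative and vanishes at `t₀`, then for all `t`,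
`f'(t)² ≤ 2 f(t) · max {f''(t₀ + r(t - t₀)) : 0 ≤ r ≤ 2}`. -/
theorem deriv_sq_le_of_nonneg_C2 (f : ℝ → ℝ) (t₀ : ℝ)
    (hf : ContDiff ℝ 2 f)
    (hpos : ∀ t, 0 ≤ f t)
    (h0 : f t₀ = 0) :
    ∀ t : ℝ, (deriv f t) ^ 2 ≤
      2 * f t * sSup ((fun r : ℝ => iteratedDeriv 2 f (t₀ + r * (t - t₀))) '' Set.Icc 0 2) := by
  intro t
  rcases le_or_gt t₀ t with ht | ht
  · exact aux_main f t₀ hf hpos h0 t ht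
  · set g : ℝ → ℝ := fun s => f (2*t₀ - s) with hg_def
    have hg : ContDiff ℝ 2 g := hf.comp (contDiff_const.sub contDiff_id)
    have hgpos : ∀ s, 0 ≤ g s := fun s => hpos _
    have hg0 : g t₀ = 0 := by
      show f (2*t₀ - t₀) = 0
      rw [show 2*t₀ - t₀ = t₀ by ring, h0]
    have key := aux_main g t₀ hg hgpos hg0 (2*t₀ - t) (by linarith)
    have h1 : deriv g (2*t₀ - t) = -deriv f t := by
      have := deriv_comp_const_sub (f := f) (a := 2*t₀) (x := 2*t₀ - t)
      simpa [hg_def] using this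
    have h2 : g (2*t₀ - t) = f t := by
      show f (2*t₀ - (2*t₀ - t)) = f t
      norm_num
    have h3 : (fun r : ℝ => iteratedDeriv 2 g (t₀ + r * (2*t₀ - t - t₀)))
        = (fun r : ℝ => iteratedDeriv 2 f (t₀ + r * (t - t₀))) := by
      funext r
      rw [show (fun s => f (2*t₀ - s)) = g from rfl] at *
      have := iter2_reflect f (2*t₀) (t₀ + r * (2*t₀ - t - t₀))
      rw [hg_def, this]
      congr 1
      ring
    rw [h1, h2, h3] at key
    simpa using key
end

section
/- The function f(t) = sin²(1/t)·e^{−1/t} + e^{−2/t} for t > 0 and f(t) = 0 for t ≤ 0 is a nonnegative C^∞ function, which is the sum of two nonnegative C^∞ functions each admitting a C^∞ square root, but f itself admits no C² square root near 0. -/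
noncomputable section
open Polynomial Real Filter Set Function
open scoped Topology

/-- `(p(1/x) sin(1/x) + q(1/x) cos(1/x)) e^{-1/(2x)}` for `x > 0`, `0` for `x ≤ 0`. -/
def gg (p q : ℝ[X]) (x : ℝ) : ℝ :=
  (p.eval x⁻¹ * Real.sin x⁻¹ + q.eval x⁻¹ * Real.cos x⁻¹) * expNegInvGlue (2 * x)

lemma tendsto_aux (p : ℝ[X]) :
    Tendsto (fun x : ℝ => p.eval x⁻¹ * expNegInvGlue (2 * x)) (𝓝 0) (𝓝 0) := by
  have h2 : Tendsto (fun x : ℝ => 2 * x) (𝓝 0) (𝓝 (2 * 0 : ℝ)) :=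
    (continuous_const.mul continuous_id).tendsto 0
  rw [mul_zero] at h2
  have := (expNegInvGlue.tendsto_polynomial_inv_mul_zero (p.comp (C 2 * X))).comp h2
  refine this.congr fun x => ?_
  rcases eq_or_ne x 0 with rfl | hx
  · simp
  · show (p.comp (C 2 * X)).eval (2*x)⁻¹ * expNegInvGlue (2*x) = _
    rw [eval_comp, eval_mul, eval_C, eval_X]
    congr 2
    field_simp
lemma tendsto_gg (p q : ℝ[X]) : Tendsto (gg p q) (𝓝 0) (𝓝 0) := by
  have h := ((tendsto_aux p).abs.add (tendsto_aux q).abs)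
  rw [show |(0:ℝ)| + |(0:ℝ)| = 0 by simp] at h
  refine squeeze_zero_norm (fun x => ?_) h
  have hE : 0 ≤ expNegInvGlue (2 * x) := expNegInvGlue.nonneg _
  have h1 : |p.eval x⁻¹ * Real.sin x⁻¹| ≤ |p.eval x⁻¹| := by
    rw [abs_mul]
    exact mul_le_of_le_one_right (abs_nonneg _) (Real.abs_sin_le_one _)
  have h2 : |q.eval x⁻¹ * Real.cos x⁻¹| ≤ |q.eval x⁻¹| := by
    rw [abs_mul]
    exact mul_le_of_le_one_right (abs_nonneg _) (Real.abs_cos_le_one _)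
  calc ‖gg p q x‖
      = |p.eval x⁻¹ * Real.sin x⁻¹ + q.eval x⁻¹ * Real.cos x⁻¹| * expNegInvGlue (2*x) := by
        rw [gg, Real.norm_eq_abs, abs_mul, abs_of_nonneg hE]
    _ ≤ (|p.eval x⁻¹| + |q.eval x⁻¹|) * expNegInvGlue (2*x) := by
        gcongr
        exact (abs_add_le _ _).trans (by gcongr)
    _ = |p.eval x⁻¹ * expNegInvGlue (2*x)| + |q.eval x⁻¹ * expNegInvGlue (2*x)| := by
        rw [abs_mul, abs_mul, abs_of_nonneg hE]; ring

def P1 (p q : ℝ[X]) : ℝ[X] := X^2 * (C (1/2) * p - derivative p + q)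
def Q1 (p q : ℝ[X]) : ℝ[X] := X^2 * (C (1/2) * q - derivative q - p)

lemma gg_of_nonpos (p q : ℝ[X]) {x : ℝ} (hx : x ≤ 0) : gg p q x = 0 := by
  rw [gg, expNegInvGlue.zero_of_nonpos (by linarith), mul_zero]

lemma hasDerivAt_gg (p q : ℝ[X]) (x : ℝ) :
    HasDerivAt (gg p q) (gg (P1 p q) (Q1 p q) x) x := by
  rcases lt_trichotomy x 0 with hx | rfl | hx
  · rw [gg_of_nonpos _ _ hx.le]
    refine (hasDerivAt_const _ 0).congr_of_eventuallyEq ?_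
    filter_upwards [gt_mem_nhds hx] with y hy
    rw [gg_of_nonpos _ _ hy.le]
  · rw [gg_of_nonpos _ _ le_rfl, hasDerivAt_iff_tendsto_slope]
    refine ((tendsto_gg (X * p) (X * q)).mono_left inf_le_left).congr fun x => ?_
    rw [slope_def_field, gg_of_nonpos _ _ le_rfl, gg, gg]
    simp only [eval_mul, eval_X]
    rw [div_eq_mul_inv]
    ring
  · have hinv : HasDerivAt (fun y : ℝ => y⁻¹) (-(x^2)⁻¹) x := hasDerivAt_inv hx.ne'
    have hp : HasDerivAt (fun y : ℝ => p.eval y⁻¹)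
        ((derivative p).eval x⁻¹ * -(x^2)⁻¹) x := (p.hasDerivAt x⁻¹).comp x hinv
    have hq : HasDerivAt (fun y : ℝ => q.eval y⁻¹)
        ((derivative q).eval x⁻¹ * -(x^2)⁻¹) x := (q.hasDerivAt x⁻¹).comp x hinv
    have hsin : HasDerivAt (fun y : ℝ => Real.sin y⁻¹)
        (Real.cos x⁻¹ * -(x^2)⁻¹) x := (Real.hasDerivAt_sin x⁻¹).comp x hinv
    have hcos : HasDerivAt (fun y : ℝ => Real.cos y⁻¹)
        (-Real.sin x⁻¹ * -(x^2)⁻¹) x := (Real.hasDerivAt_cos x⁻¹).comp x hinv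
    have h2y : HasDerivAt (fun y : ℝ => 2 * y) 2 x := by
      simpa using (hasDerivAt_id x).const_mul (2:ℝ)
    have hinv2 : HasDerivAt (fun y : ℝ => (2*y)⁻¹) (-((2*x)^2)⁻¹ * 2) x :=
      (hasDerivAt_inv (by positivity)).comp x h2y
    have hexp : HasDerivAt (fun y : ℝ => Real.exp (-(2*y)⁻¹))
        (Real.exp (-(2*x)⁻¹) * -(-((2*x)^2)⁻¹ * 2)) x :=
      (Real.hasDerivAt_exp _).comp x hinv2.neg
    have htot := ((hp.mul hsin).add (hq.mul hcos)).mul hexp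
    have heq : gg p q =ᶠ[𝓝 x] fun y =>
        (p.eval y⁻¹ * Real.sin y⁻¹ + q.eval y⁻¹ * Real.cos y⁻¹) * Real.exp (-(2*y)⁻¹) := by
      filter_upwards [lt_mem_nhds hx] with y hy
      rw [gg, expNegInvGlue]
      rw [if_neg (by linarith)]
    rw [show gg (P1 p q) (Q1 p q) x
        = ((P1 p q).eval x⁻¹ * Real.sin x⁻¹ + (Q1 p q).eval x⁻¹ * Real.cos x⁻¹)
          * Real.exp (-(2*x)⁻¹) by
      rw [gg, expNegInvGlue, if_neg (by linarith)]]
    refine (htot.congr_of_eventuallyEq heq).congr_deriv ?_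
    simp only [P1, Q1, eval_mul, eval_add, eval_sub, eval_pow, eval_X, eval_C, Pi.mul_apply, Pi.add_apply]
    field_simp
    ring

lemma contDiff_gg {n : ℕ∞} (p q : ℝ[X]) : ContDiff ℝ n (gg p q) := by
  apply contDiff_all_iff_nat.2 (fun m => ?_) n
  induction m generalizing p q with
  | zero =>
    exact contDiff_zero.2 (continuous_iff_continuousAt.2 fun x => (hasDerivAt_gg p q x).differentiableAt.continuousAt)
  | succ m ihm =>
    rw [show ((m + 1 : ℕ) : WithTop ℕ∞) = m + 1 from rfl]
    refine contDiff_succ_iff_deriv.2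
      ⟨fun x => (hasDerivAt_gg p q x).differentiableAt, by simp, ?_⟩
    rw [show deriv (gg p q) = gg (P1 p q) (Q1 p q) from funext fun x => (hasDerivAt_gg p q x).deriv]
    exact ihm (P1 p q) (Q1 p q)

lemma sq_exp_neg_inv {t : ℝ} (ht : 0 < t) : Real.exp (-(2*t)⁻¹) ^ 2 = Real.exp (-1/t) := by
  rw [sq, ← Real.exp_add]
  congr 1
  field_simp
  ring
lemma sq_exp_neg_inv' {t : ℝ} (ht : 0 < t) : Real.exp (-t⁻¹) ^ 2 = Real.exp (-2/t) := by
  rw [sq, ← Real.exp_add]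
  congr 1
  field_simp
  ring

def fW : ℝ → ℝ := fun t => if 0 < t then
  Real.sin (1 / t) ^ 2 * Real.exp (-1 / t) + Real.exp (-2 / t) else 0

def F1 : ℝ → ℝ := fun t =>
  (Real.sin t⁻¹ ^ 2 - 2 * Real.sin t⁻¹ * Real.cos t⁻¹) * Real.exp (-t⁻¹) * t⁻¹ ^ 2
    + 2 * Real.exp (-(2 * t⁻¹)) * t⁻¹ ^ 2

lemma hasDerivAt_fW {t : ℝ} (ht : 0 < t) : HasDerivAt fW (F1 t) t := by
  have hinv : HasDerivAt (fun y : ℝ => y⁻¹) (-(t^2)⁻¹) t := hasDerivAt_inv ht.ne'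
  have hsin : HasDerivAt (fun y : ℝ => Real.sin y⁻¹) (Real.cos t⁻¹ * -(t^2)⁻¹) t :=
    (Real.hasDerivAt_sin t⁻¹).comp t hinv
  have hsin2 : HasDerivAt (fun y : ℝ => Real.sin y⁻¹ ^ 2)
      (2 * Real.sin t⁻¹ ^ 1 * (Real.cos t⁻¹ * -(t^2)⁻¹)) t := hsin.pow 2
  have hexp1 : HasDerivAt (fun y : ℝ => Real.exp (-y⁻¹))
      (Real.exp (-t⁻¹) * -(-(t^2)⁻¹)) t := (Real.hasDerivAt_exp _).comp t hinv.neg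
  have hexp2 : HasDerivAt (fun y : ℝ => Real.exp (-(2 * y⁻¹)))
      (Real.exp (-(2 * t⁻¹)) * -(2 * -(t^2)⁻¹)) t :=
    (Real.hasDerivAt_exp _).comp t (hinv.const_mul 2).neg
  have htot := (hsin2.mul hexp1).add hexp2
  have heq : (fun y : ℝ => Real.sin y⁻¹ ^ 2 * Real.exp (-y⁻¹) + Real.exp (-(2 * y⁻¹)))
      =ᶠ[𝓝 t] fW := by
    filter_upwards [lt_mem_nhds ht] with y hy
    rw [fW, if_pos hy, one_div, neg_div, one_div]
    congr 2
    field_simp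
  refine (htot.congr_of_eventuallyEq heq.symm).congr_deriv ?_
  rw [F1]
  field_simp
  ring

lemma hasDerivAt_F1 {t : ℝ} (ht : 0 < t) (hs : Real.sin t⁻¹ = 0) :
    HasDerivAt F1 (2 * t⁻¹^4 * Real.exp (-t⁻¹)
      + 4 * t⁻¹^4 * Real.exp (-(2*t⁻¹)) - 4 * t⁻¹^3 * Real.exp (-(2*t⁻¹))) t := by
  have hinv : HasDerivAt (fun y : ℝ => y⁻¹) (-(t^2)⁻¹) t := hasDerivAt_inv ht.ne'
  have hsin : HasDerivAt (fun y : ℝ => Real.sin y⁻¹) (Real.cos t⁻¹ * -(t^2)⁻¹) t :=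
    (Real.hasDerivAt_sin t⁻¹).comp t hinv
  have hcos : HasDerivAt (fun y : ℝ => Real.cos y⁻¹) (-Real.sin t⁻¹ * -(t^2)⁻¹) t :=
    (Real.hasDerivAt_cos t⁻¹).comp t hinv
  have hsin2 : HasDerivAt (fun y : ℝ => Real.sin y⁻¹ ^ 2)
      (2 * Real.sin t⁻¹ ^ 1 * (Real.cos t⁻¹ * -(t^2)⁻¹)) t := hsin.pow 2
  have hexp1 : HasDerivAt (fun y : ℝ => Real.exp (-y⁻¹))
      (Real.exp (-t⁻¹) * -(-(t^2)⁻¹)) t := (Real.hasDerivAt_exp _).comp t hinv.neg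
  have hexp2 : HasDerivAt (fun y : ℝ => Real.exp (-(2 * y⁻¹)))
      (Real.exp (-(2 * t⁻¹)) * -(2 * -(t^2)⁻¹)) t :=
    (Real.hasDerivAt_exp _).comp t (hinv.const_mul 2).neg
  have hpow : HasDerivAt (fun y : ℝ => y⁻¹ ^ 2) (2 * t⁻¹ ^ 1 * -(t^2)⁻¹) t := hinv.pow 2
  have htot := (((hsin2.sub ((hsin.const_mul 2).mul hcos)).mul hexp1).mul hpow).add
    (((hexp2.const_mul 2)).mul hpow)
  refine htot.congr_deriv ?_
  simp only [Pi.mul_apply, Pi.sub_apply, Pi.add_apply]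
  have hc : Real.cos t⁻¹ ^ 2 = 1 := by
    have := Real.sin_sq_add_cos_sq t⁻¹
    rw [hs] at this
    nlinarith
  rw [hs]
  rcases mul_self_eq_one_iff.1 (by nlinarith : Real.cos t⁻¹ * Real.cos t⁻¹ = 1) with h | h <;>
    rw [h] <;> field_simp <;> ring

set_option maxHeartbeats 1600000 in
lemma noC2sqrt :
    ¬ ∃ g : ℝ → ℝ, ContDiffAt ℝ 2 g 0 ∧ ∀ᶠ t in nhds (0 : ℝ), g t ^ 2 = fW t := by
  rintro ⟨g, hg, hfg⟩
  obtain ⟨U, hU, hUc⟩ := hg.contDiffOn le_rfl (by simp)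
  obtain ⟨ε, hε, hball⟩ := Metric.mem_nhds_iff.1 hU
  set s := Metric.ball (0:ℝ) ε with hsdef
  have hs : IsOpen s := Metric.isOpen_ball
  have h0s : (0:ℝ) ∈ s := by simp [hsdef, hε]
  have hgs : ContDiffOn ℝ 2 g s := hUc.mono hball
  have hd1 : ∀ x ∈ s, DifferentiableAt ℝ g x := fun x hx =>
    (hgs.differentiableOn (by norm_num)).differentiableAt (hs.mem_nhds hx)
  have hderiv1 : ContDiffOn ℝ 1 (deriv g) s := hgs.deriv_of_isOpen hs (by norm_num)
  have hd2 : ∀ x ∈ s, DifferentiableAt ℝ (deriv g) x := fun x hx =>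
    (hderiv1.differentiableOn (by norm_num)).differentiableAt (hs.mem_nhds hx)
  have hcontAt : ContinuousAt (deriv (deriv g)) 0 :=
    (hderiv1.continuousOn_deriv_of_isOpen hs (by norm_num)).continuousAt (hs.mem_nhds h0s)
  set M := |deriv (deriv g) 0| + 1 with hMdef
  have hM : ∀ᶠ t in 𝓝 (0:ℝ), |deriv (deriv g) t| < M := by
    have habs : ContinuousAt (fun t => |deriv (deriv g) t|) 0 :=
      continuous_abs.continuousAt.comp hcontAt
    exact habs.eventually_lt_const (lt_add_one _)
  have hfg' : (fun t => g t ^ 2) =ᶠ[𝓝 (0:ℝ)] fW := hfg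
  have h2 : ∀ᶠ t in 𝓝 (0:ℝ), deriv (fun y => g y ^ 2) t = deriv fW t :=
    hfg'.eventuallyEq_nhds.mono fun t ht => ht.deriv_eq
  have h2' : deriv (fun y => g y ^ 2) =ᶠ[𝓝 (0:ℝ)] deriv fW := h2
  have h4 : ∀ᶠ t in 𝓝 (0:ℝ), deriv (deriv (fun y => g y ^ 2)) t = deriv (deriv fW) t :=
    h2'.eventuallyEq_nhds.mono fun t ht => ht.deriv_eq
  have hall := (((hfg.and h2).and h4).and hM).and (hs.mem_nhds h0s : s ∈ 𝓝 (0:ℝ))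
  rw [Metric.eventually_nhds_iff] at hall
  obtain ⟨δ, hδ, hprop⟩ := hall
  -- choose a large k
  obtain ⟨k, hk⟩ := exists_nat_gt (max (max δ⁻¹ 2) M)
  set u : ℝ := k * Real.pi with hudef
  have hpi : (1:ℝ) ≤ Real.pi := by nlinarith [Real.pi_gt_three]
  have hku : (k:ℝ) ≤ u := by
    rw [hudef]
    nlinarith [Nat.cast_nonneg (α := ℝ) k]
  have hu2 : (2:ℝ) ≤ u := le_trans (le_trans (le_max_right _ _) (le_max_left _ _)) <|
    le_trans hk.le hku
  have huM : M < u := lt_of_le_of_lt (le_max_right _ _) (lt_of_lt_of_le hk hku)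
  have huδ : δ⁻¹ < u := lt_of_le_of_lt (le_trans (le_max_left _ _) (le_max_left _ _))
    (lt_of_lt_of_le hk hku)
  have hu0 : 0 < u := by linarith
  set t₀ : ℝ := u⁻¹ with ht₀def
  have ht₀pos : 0 < t₀ := inv_pos.2 hu0
  have ht₀inv : t₀⁻¹ = u := inv_inv u
  have ht₀small : dist t₀ 0 < δ := by
    rw [Real.dist_eq, sub_zero, abs_of_pos ht₀pos, ht₀def]
    exact (inv_lt_comm₀ hu0 hδ).2 huδ
  obtain ⟨⟨⟨⟨hfgt, h2t⟩, h4t⟩, hMt⟩, hts⟩ := hprop ht₀small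
  have hsin : Real.sin t₀⁻¹ = 0 := by rw [ht₀inv, hudef]; exact Real.sin_nat_mul_pi k
  have hy2 : (2:ℝ) ≤ t₀⁻¹ := by rw [ht₀inv]; exact hu2
  have hyM : M < t₀⁻¹ := by rw [ht₀inv]; exact huM
  have hE : 0 < Real.exp (-t₀⁻¹) := Real.exp_pos _
  have hE2 : Real.exp (-(2 * t₀⁻¹)) = Real.exp (-t₀⁻¹) ^ 2 := by
    rw [sq, ← Real.exp_add]; congr 1; ring
  -- (1) value equation
  have ha2 : g t₀ ^ 2 = Real.exp (-t₀⁻¹) ^ 2 := by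
    rw [hfgt, fW, if_pos ht₀pos, one_div, hsin]
    rw [show -2 / t₀ = -(2 * t₀⁻¹) by field_simp, hE2]
    ring
  -- (2) first derivative equation
  have hb : 2 * g t₀ ^ 1 * deriv g t₀ = 2 * Real.exp (-t₀⁻¹) ^ 2 * t₀⁻¹ ^ 2 := by
    have lhs : deriv (fun y => g y ^ 2) t₀ = 2 * g t₀ ^ 1 * deriv g t₀ :=
      (((hd1 t₀ hts).hasDerivAt).pow 2).deriv
    have rhs : deriv fW t₀ = F1 t₀ := (hasDerivAt_fW ht₀pos).deriv
    rw [lhs.symm, h2t, rhs, F1, hsin, hE2]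
    ring
  -- (3) second derivative equation
  have hc : 2 * (deriv g t₀ * deriv g t₀ + g t₀ * deriv (deriv g) t₀)
      = 2 * t₀⁻¹^4 * Real.exp (-t₀⁻¹) + 4 * t₀⁻¹^4 * Real.exp (-t₀⁻¹)^2
        - 4 * t₀⁻¹^3 * Real.exp (-t₀⁻¹)^2 := by
    have e1 : deriv (fun y => g y ^ 2) =ᶠ[𝓝 t₀] fun x => 2 * (g x * deriv g x) := by
      filter_upwards [hs.mem_nhds hts] with x hx
      have : deriv (fun y => g y ^ 2) x = 2 * g x ^ 1 * deriv g x :=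
        (((hd1 x hx).hasDerivAt).pow 2).deriv
      rw [this]; ring
    have e2 : deriv (deriv (fun y => g y ^ 2)) t₀
        = 2 * (deriv g t₀ * deriv g t₀ + g t₀ * deriv (deriv g) t₀) := by
      rw [e1.deriv_eq]
      exact (((hd1 t₀ hts).hasDerivAt.mul (hd2 t₀ hts).hasDerivAt).const_mul 2).deriv
    have e3 : deriv fW =ᶠ[𝓝 t₀] F1 := by
      filter_upwards [lt_mem_nhds ht₀pos] with x hx
      exact (hasDerivAt_fW hx).deriv
    have e4 : deriv (deriv fW) t₀ = deriv F1 t₀ := e3.deriv_eq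
    rw [← e2, h4t, e4, (hasDerivAt_F1 ht₀pos hsin).deriv, hE2]
  -- final algebra
  set a := g t₀
  set b := deriv g t₀
  set G := deriv (deriv g) t₀
  set E := Real.exp (-t₀⁻¹)
  set Y := t₀⁻¹
  -- |a| = E
  have habs : |a| = E := by
    rw [← Real.sqrt_sq_eq_abs, ha2, Real.sqrt_sq hE.le]
  have hane : a ≠ 0 := fun h => by rw [h, abs_zero] at habs; exact hE.ne habs
  -- b² = E² Y⁴
  have hab : a * b = E^2 * Y^2 := by nlinarith [hb]
  have hbsq : b ^ 2 = E^2 * Y^4 := by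
    have h1 : (a * b)^2 = (E^2 * Y^2)^2 := by rw [hab]
    have h2 : a^2 * b^2 = E^2 * (E^2 * Y^4) := by nlinarith [h1]
    rw [ha2] at h2
    have := mul_left_cancel₀ (pow_ne_zero 2 hE.ne') h2
    linarith [this]
  -- a G value
  have haG : a * G = Y^4 * E + Y^4 * E^2 - 2 * Y^3 * E^2 := by nlinarith [hc, hbsq]
  have haG_ge : a * G ≥ Y^4 * E := by nlinarith [sq_nonneg E, hE]
  have hEG : E * |G| ≥ Y^4 * E := by
    calc E * |G| = |a| * |G| := by rw [habs]
      _ = |a * G| := (abs_mul a G).symm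
      _ ≥ a * G := le_abs_self _
      _ ≥ Y^4 * E := haG_ge
  have hGge : |G| ≥ Y^4 := by
    have := (mul_le_mul_iff_right₀ hE).1 (by linarith [hEG] : E * (Y^4) ≤ E * |G|)
    linarith
  have hY1 : (1:ℝ) ≤ Y := by linarith
  have hY4 : Y ≤ Y^4 := le_self_pow₀ hY1 (by norm_num)
  linarith [hMt, hyM, hGge, hY4]

/-- Warner's example: `f t = sin²(1/t)·e^{-1/t} + e^{-2/t}` for `t > 0`, `f t = 0`
for `t ≤ 0`, is a nonnegative smooth function which is a sum of two nonnegative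
smooth functions each admitting a smooth square root, yet `f` admits no `C²`
square root near `0`. -/
theorem no_C2_sqrt_Warner :
    ∃ f f₁ f₂ : ℝ → ℝ,
      (∀ t : ℝ, f t = if 0 < t then
          Real.sin (1 / t) ^ 2 * Real.exp (-1 / t) + Real.exp (-2 / t) else 0) ∧
      ContDiff ℝ (⊤ : ℕ∞) f ∧ (∀ t, 0 ≤ f t) ∧
      f = f₁ + f₂ ∧
      ContDiff ℝ (⊤ : ℕ∞) f₁ ∧ (∀ t, 0 ≤ f₁ t) ∧
      ContDiff ℝ (⊤ : ℕ∞) f₂ ∧ (∀ t, 0 ≤ f₂ t) ∧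
      (∃ g₁ : ℝ → ℝ, ContDiff ℝ (⊤ : ℕ∞) g₁ ∧ ∀ t, g₁ t ^ 2 = f₁ t) ∧
      (∃ g₂ : ℝ → ℝ, ContDiff ℝ (⊤ : ℕ∞) g₂ ∧ ∀ t, g₂ t ^ 2 = f₂ t) ∧
      ¬ ∃ g : ℝ → ℝ, ContDiffAt ℝ 2 g 0 ∧ ∀ᶠ t in nhds (0 : ℝ), g t ^ 2 = f t := by
  set f₁ : ℝ → ℝ := fun t => gg 1 0 t ^ 2 with hf₁
  set f₂ : ℝ → ℝ := fun t => expNegInvGlue t ^ 2 with hf₂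
  have hsum : ∀ t : ℝ, (if 0 < t then
      Real.sin (1 / t) ^ 2 * Real.exp (-1 / t) + Real.exp (-2 / t) else 0) = f₁ t + f₂ t := by
    intro t
    by_cases ht : 0 < t
    · rw [if_pos ht]
      show _ = gg 1 0 t ^ 2 + expNegInvGlue t ^ 2
      have e0 : gg 1 0 t = Real.sin t⁻¹ * Real.exp (-(2*t)⁻¹) := by
        rw [gg, expNegInvGlue, if_neg (by linarith)]
        simp
      have eE : expNegInvGlue t = Real.exp (-t⁻¹) := by
        rw [expNegInvGlue, if_neg (by linarith)]
      rw [e0, eE, mul_pow, sq_exp_neg_inv ht, sq_exp_neg_inv' ht, one_div]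
    · rw [if_neg ht]
      show (0:ℝ) = gg 1 0 t ^ 2 + expNegInvGlue t ^ 2
      rw [gg_of_nonpos _ _ (not_lt.1 ht), expNegInvGlue.zero_of_nonpos (not_lt.1 ht)]
      norm_num
  refine ⟨fW, f₁, f₂,
    fun t => rfl, ?_, ?_, ?_, ?_, fun t => sq_nonneg _, ?_, fun t => sq_nonneg _,
    ⟨gg 1 0, contDiff_gg 1 0, fun t => rfl⟩, ⟨expNegInvGlue, expNegInvGlue.contDiff, fun t => rfl⟩,
    ?_⟩
  · rw [show fW = f₁ + f₂ from funext fun t => hsum t]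
    exact ((contDiff_gg 1 0).pow 2).add (expNegInvGlue.contDiff.pow 2)
  · intro t
    show (0:ℝ) ≤ if 0 < t then _ else 0
    rw [hsum t]
    positivity
  · exact funext fun t => hsum t
  · exact (contDiff_gg 1 0).pow 2
  · exact expNegInvGlue.contDiff.pow 2
  · exact noC2sqrt
end
end
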